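/- For nonnegative integers m, n, k with k ≤ m+n−2, the coefficient of s^{m−1} t^{n−1} in the polynomial (1+s)^m (1+t)^n (s+t)^k equals ∑_{i+j=k, i,j≥0} C(m, i+1) · C(n, j+1) · C(k, i). -/
import Mathlib
open MvPolynomial Finset

lemma coeff_Xpow_mul_Xpow (p q a b : ℕ) :
    MvPolynomial.coeff (Finsupp.single 0 a + Finsupp.single 1 b)
      (X 0 ^ p * X 1 ^ q : MvPolynomial (Fin 2) ℤ)
    = if p = a ∧ q = b then 1 else 0 := by
  rw [X_pow_eq_monomial, X_pow_eq_monomial, monomial_mul, mul_one, coeff_monomial]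
  congr 1
  rw [Finsupp.ext_iff, eq_iff_iff]
  constructor
  · intro h
    have h0 := h 0
    have h1 := h 1
    simp [Finsupp.single_apply] at h0 h1
    exact ⟨h0, h1⟩
  · rintro ⟨rfl, rfl⟩; intro x; rfl

lemma sum_ite_shift {M : Type*} [AddCommMonoid M] (m l : ℕ) (hm : 1 ≤ m) (f : ℕ → M) :
    ∑ a ∈ Finset.range (m + 1), (if m - a + l = m - 1 then f a else 0)
      = if l + 1 ≤ m then f (l + 1) else 0 := by
  rcases le_or_gt (l + 1) m with h | h
  · rw [if_pos h, Finset.sum_eq_single (l + 1)]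
    · rw [if_pos (by omega)]
    · intro a ha hne
      rw [if_neg]
      rw [Finset.mem_range] at ha
      omega
    · intro hmem
      exact absurd (Finset.mem_range.mpr (by omega)) hmem
  · rw [if_neg (by omega)]
    apply Finset.sum_eq_zero
    intro a ha
    rw [Finset.mem_range] at ha
    rw [if_neg (by omega)]

theorem stmt_9 (m n k : ℕ) (hm : 1 ≤ m) (hn : 1 ≤ n) (hk : k ≤ m + n - 2) :
    MvPolynomial.coeff (Finsupp.single 0 (m - 1) + Finsupp.single 1 (n - 1))
        ((1 + X 0) ^ m * (1 + X 1) ^ n * (X 0 + X 1) ^ k : MvPolynomial (Fin 2) ℤ)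
      = ∑ i ∈ Finset.range (k + 1),
          (Nat.choose m (i + 1) * Nat.choose n (k - i + 1) * Nat.choose k i : ℤ) := by
  have e1 : ((1 + X 0) ^ m * (1 + X 1) ^ n * (X 0 + X 1) ^ k : MvPolynomial (Fin 2) ℤ)
      = ∑ a ∈ Finset.range (m + 1), ∑ b ∈ Finset.range (n + 1), ∑ l ∈ Finset.range (k + 1),
          MvPolynomial.C ((m.choose a * n.choose b * k.choose l : ℕ) : ℤ)
            * (X 0 ^ (m - a + l) * X 1 ^ (n - b + (k - l))) := by
    rw [add_pow, add_pow, add_pow]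
    rw [Finset.sum_mul_sum, Finset.sum_mul_sum]
    refine Finset.sum_congr rfl fun a _ => ?_
    simp only [Finset.sum_mul]
    rw [Finset.sum_comm]
    refine Finset.sum_congr rfl fun b _ => Finset.sum_congr rfl fun l _ => ?_
    push_cast
    simp only [map_mul, map_natCast]
    ring
  rw [e1]
  simp only [coeff_sum, coeff_C_mul, coeff_Xpow_mul_Xpow]
  rw [show (∑ a ∈ Finset.range (m + 1), ∑ b ∈ Finset.range (n + 1), ∑ l ∈ Finset.range (k + 1),
        ((m.choose a * n.choose b * k.choose l : ℕ) : ℤ)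
          * (if m - a + l = m - 1 ∧ n - b + (k - l) = n - 1 then 1 else 0))
      = ∑ l ∈ Finset.range (k + 1), ∑ a ∈ Finset.range (m + 1), ∑ b ∈ Finset.range (n + 1),
        ((m.choose a * n.choose b * k.choose l : ℕ) : ℤ)
          * (if m - a + l = m - 1 ∧ n - b + (k - l) = n - 1 then 1 else 0) from
    (Finset.sum_congr rfl fun a _ => Finset.sum_comm).trans Finset.sum_comm]
  refine Finset.sum_congr rfl fun l hl => ?_
  rw [Finset.mem_range] at hl
  have step : ∀ a ∈ Finset.range (m + 1),
      (∑ b ∈ Finset.range (n + 1),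
        ((m.choose a * n.choose b * k.choose l : ℕ) : ℤ)
          * (if m - a + l = m - 1 ∧ n - b + (k - l) = n - 1 then 1 else 0))
      = if m - a + l = m - 1 then
          (if (k - l) + 1 ≤ n then ((m.choose a * n.choose (k - l + 1) * k.choose l : ℕ) : ℤ) else 0)
        else 0 := by
    intro a _
    rw [← sum_ite_shift n (k - l) hn (fun b => ((m.choose a * n.choose b * k.choose l : ℕ) : ℤ))]
    by_cases hA : m - a + l = m - 1
    · rw [if_pos hA]
      refine Finset.sum_congr rfl fun b _ => ?_
      simp [hA, mul_ite]
    · rw [if_neg hA]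
      apply Finset.sum_eq_zero
      intro b _
      simp [hA]
  rw [Finset.sum_congr rfl step,
    sum_ite_shift m l hm
      (fun a => if (k - l) + 1 ≤ n then ((m.choose a * n.choose (k - l + 1) * k.choose l : ℕ) : ℤ) else 0)]
  by_cases h1 : l + 1 ≤ m
  · rw [if_pos h1]
    by_cases h2 : k - l + 1 ≤ n
    · rw [if_pos h2]; push_cast; ring
    · rw [if_neg h2]
      rw [Nat.choose_eq_zero_of_lt (by omega : n < k - l + 1)]
      push_cast; ring
  · rw [if_neg h1]
    rw [Nat.choose_eq_zero_of_lt (by omega : m < l + 1)]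
    push_cast; ring
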